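/- arXiv:1805.03847 — 3 statements merged into one kernel-verified Lean document; each statement's English description precedes it below -/
import Mathlib

section
/- Let Γ ⊆ ℝⁿ be open and convex, S ⊆ Γ convex, f : Γ → ℝ Fréchet differentiable and quasiconvex, with nonempty solution set S̄ = argmin{f(x) | x ∈ S}. Then for any x, y ∈ S̄ with ∇f(x) ≠ 0 and ∇f(y) ≠ 0, the normalized gradients coincide: ∇f(x)/‖∇f(x)‖ = ∇f(y)/‖∇f(y)‖. -/
open Filter Topology InnerProductSpace

section Helpers

private lemma slope_tendsto' {φ : ℝ → ℝ} {a : ℝ} (h : HasDerivAt φ a 0) :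
    Tendsto (slope φ 0) (𝓝[>] 0) (𝓝 a) :=
  (hasDerivAt_iff_tendsto_slope.mp h).mono_left
    (nhdsWithin_mono 0 fun t ht => ne_of_gt ht)

private lemma deriv_nonpos_of_evle {φ : ℝ → ℝ} {a : ℝ} (h : HasDerivAt φ a 0)
    (hle : ∀ᶠ t in 𝓝[>] (0:ℝ), φ t ≤ φ 0) : a ≤ 0 := by
  refine le_of_tendsto (slope_tendsto' h) ?_
  filter_upwards [hle, self_mem_nhdsWithin] with t h1 h2
  rw [slope_def_field]
  exact div_nonpos_of_nonpos_of_nonneg (by linarith) (by simpa using le_of_lt h2)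

private lemma deriv_eq_zero_of_eveq {φ : ℝ → ℝ} {a : ℝ} (h : HasDerivAt φ a 0)
    (heq : ∀ᶠ t in 𝓝[>] (0:ℝ), φ t = φ 0) : a = 0 := by
  have h2 : Tendsto (slope φ 0) (𝓝[>] (0:ℝ)) (𝓝 0) := by
    refine Tendsto.congr' ?_ tendsto_const_nhds
    filter_upwards [heq] with t ht
    rw [slope_def_field, ht, sub_self, zero_div]
  exact tendsto_nhds_unique (slope_tendsto' h) h2

private lemma ev_lt_of_deriv_neg {φ : ℝ → ℝ} {a : ℝ} (h : HasDerivAt φ a 0)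
    (ha : a < 0) : ∀ᶠ t in 𝓝[>] (0:ℝ), φ t < φ 0 := by
  have h1 : ∀ᶠ t in 𝓝[>] (0:ℝ), slope φ 0 t < 0 :=
    (slope_tendsto' h).eventually_lt_const ha
  filter_upwards [h1, self_mem_nhdsWithin] with t h1 h2
  rw [slope_def_field, sub_zero] at h1
  have ht : (0:ℝ) < t := h2
  by_contra hge
  push_neg at hge
  have : (0:ℝ) ≤ (φ t - φ 0) / t := div_nonneg (by linarith) ht.le
  linarith

private lemma dirDeriv {E : Type*} [NormedAddCommGroup E] [InnerProductSpace ℝ E]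
    [CompleteSpace E] {f : E → ℝ} {p : E} (hf : DifferentiableAt ℝ f p) (w : E) :
    HasDerivAt (fun t : ℝ => f (p + t • w)) (inner ℝ (gradient f p) w : ℝ) 0 := by
  have hF : HasFDerivAt f (toDual ℝ E (gradient f p)) p :=
    hf.hasGradientAt.hasFDerivAt
  have hc : HasDerivAt (fun t : ℝ => p + t • w) w 0 := by
    simpa using ((hasDerivAt_id (0:ℝ)).smul_const w).const_add p
  have hF' : HasFDerivAt f (toDual ℝ E (gradient f p)) ((fun t : ℝ => p + t • w) 0) := by
    simpa using hF
  have := hF'.comp_hasDerivAt 0 hc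
  simpa [Function.comp_def, toDual_apply_apply] using this

end Helpers

set_option maxHeartbeats 1000000 in
theorem stmt_4 {n : ℕ} (Γ S : Set (EuclideanSpace ℝ (Fin n)))
    (hΓo : IsOpen Γ) (hΓ : Convex ℝ Γ) (hS : Convex ℝ S) (hSΓ : S ⊆ Γ)
    (f : EuclideanSpace ℝ (Fin n) → ℝ)
    (hdiff : ∀ z ∈ Γ, DifferentiableAt ℝ f z)
    (hqc : ∀ x ∈ Γ, ∀ y ∈ Γ, ∀ t ∈ Set.Icc (0:ℝ) 1,
        f (x + t • (y - x)) ≤ max (f x) (f y))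
    (Sbar : Set (EuclideanSpace ℝ (Fin n)))
    (hSbar : Sbar = {x ∈ S | ∀ y ∈ S, f x ≤ f y})
    (hne : Sbar.Nonempty)
    (x : EuclideanSpace ℝ (Fin n)) (hx : x ∈ Sbar)
    (y : EuclideanSpace ℝ (Fin n)) (hy : y ∈ Sbar)
    (hgx : gradient f x ≠ 0) (hgy : gradient f y ≠ 0) :
    ‖gradient f x‖⁻¹ • gradient f x = ‖gradient f y‖⁻¹ • gradient f y := by
  rw [hSbar] at hx hy
  obtain ⟨hxS, hxmin⟩ := hx
  obtain ⟨hyS, hymin⟩ := hy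
  have hxΓ := hSΓ hxS
  have hyΓ := hSΓ hyS
  set g := gradient f x with hg
  set h := gradient f y with hh
  have hfxy : f x = f y := le_antisymm (hxmin y hyS) (hymin x hxS)
  have hIoo : ∀ᶠ t in 𝓝[>] (0:ℝ), t ∈ Set.Ioo (0:ℝ) 1 :=
    Ioo_mem_nhdsGT_of_mem (by constructor <;> norm_num)
  -- ⟪h, x - y⟫ = 0 : f is constant on the segment [y,x]
  have horth : (inner ℝ h (x - y) : ℝ) = 0 := by
    apply deriv_eq_zero_of_eveq (dirDeriv (hdiff y hyΓ) (x - y))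
    filter_upwards [hIoo] with t ht
    have hmem : y + t • (x - y) ∈ S := by
      have := hS hyS hxS (by linarith [ht.2] : (0:ℝ) ≤ 1 - t) (le_of_lt ht.1)
        (by ring)
      convert this using 1
      module
    have hle : f (y + t • (x - y)) ≤ f y := by
      have := hqc y hyΓ x hxΓ t ⟨le_of_lt ht.1, le_of_lt ht.2⟩
      simpa [← hfxy, max_self] using this
    have hge : f y ≤ f (y + t • (x - y)) := hymin _ hmem
    have : f (y + t • (x - y)) = f y := le_antisymm hle hge
    simpa using this
  -- key inequality : ⟪g, d⟫ < 0 → ⟪h, d⟫ ≤ 0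
  have key : ∀ d, (inner ℝ g d : ℝ) < 0 → (inner ℝ h d : ℝ) ≤ 0 := by
    intro d hd
    have hder := dirDeriv (hdiff x hxΓ) d
    have hlt := ev_lt_of_deriv_neg hder hd
    have hΓev : ∀ᶠ t in 𝓝[>] (0:ℝ), x + t • d ∈ Γ := by
      have hcont : Tendsto (fun t : ℝ => x + t • d) (𝓝 0) (𝓝 x) := by
        have : Continuous (fun t : ℝ => x + t • d) := by continuity
        simpa using this.tendsto 0
      exact (hcont.mono_left nhdsWithin_le_nhds).eventually (hΓo.mem_nhds hxΓ)
    obtain ⟨t, ⟨hflt, hmemΓ⟩, ht0⟩ := ((hlt.and hΓev).and self_mem_nhdsWithin).exists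
    have ht0 : (0:ℝ) < t := ht0
    set z := x + t • d with hz
    have hfz : f z < f y := by
      have : f (x + (0:ℝ) • d) = f x := by simp
      rw [hz]
      calc f (x + t • d) < f (x + (0:ℝ) • d) := hflt
        _ = f y := by rw [this, hfxy]
    have h2 : (inner ℝ h (z - y) : ℝ) ≤ 0 := by
      apply deriv_nonpos_of_evle (dirDeriv (hdiff y hyΓ) (z - y))
      filter_upwards [hIoo] with s hs
      have hle : f (y + s • (z - y)) ≤ max (f y) (f z) :=
        hqc y hyΓ z hmemΓ s ⟨le_of_lt hs.1, le_of_lt hs.2⟩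
      have hmax : max (f y) (f z) = f y := max_eq_left (le_of_lt hfz)
      rw [hmax] at hle
      simpa using hle
    have hexp : (inner ℝ h (z - y) : ℝ) = inner ℝ h (x - y) + t * inner ℝ h d := by
      have : z - y = (x - y) + t • d := by rw [hz]; abel
      rw [this, inner_add_right, real_inner_smul_right]
    rw [hexp, horth, zero_add] at h2
    nlinarith
  -- key2 : ⟪g, d⟫ ≤ 0 → ⟪h, d⟫ ≤ 0
  have hgnorm : (0:ℝ) < ‖g‖ := norm_pos_iff.mpr hgx
  have key2 : ∀ d, (inner ℝ g d : ℝ) ≤ 0 → (inner ℝ h d : ℝ) ≤ 0 := by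
    intro d hd
    have hev : ∀ᶠ ε in 𝓝[>] (0:ℝ), (inner ℝ h d : ℝ) ≤ ε * inner ℝ h g := by
      filter_upwards [self_mem_nhdsWithin] with ε hε
      have hε : (0:ℝ) < ε := hε
      have h1 : (inner ℝ g (d - ε • g) : ℝ) < 0 := by
        rw [inner_sub_right, real_inner_smul_right, real_inner_self_eq_norm_sq]
        nlinarith [mul_pos hε (pow_pos hgnorm 2)]
      have h2 := key _ h1
      rw [inner_sub_right, real_inner_smul_right] at h2
      linarith
    have hT : Tendsto (fun ε : ℝ => ε * (inner ℝ h g : ℝ)) (𝓝[>] 0) (𝓝 0) := by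
      have : Tendsto (fun ε : ℝ => ε * (inner ℝ h g : ℝ)) (𝓝 0) (𝓝 (0 * inner ℝ h g)) :=
        (tendsto_id.mul_const _)
      simpa using this.mono_left nhdsWithin_le_nhds
    exact ge_of_tendsto hT hev
  -- ⟪g, h⟫ ≥ 0
  have hgh : (0:ℝ) ≤ inner ℝ g h := by
    have h1 : (inner ℝ g (-g) : ℝ) < 0 := by
      rw [inner_neg_right, real_inner_self_eq_norm_sq]; nlinarith
    have h2 := key _ h1
    rw [inner_neg_right] at h2
    have := real_inner_comm g h
    linarith
  -- equality in Cauchy-Schwarz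
  have hCS : (inner ℝ g h : ℝ) ≤ ‖g‖ * ‖h‖ := real_inner_le_norm g h
  have hkey3 : ‖g‖ ^ 2 * ‖h‖ ^ 2 ≤ (inner ℝ g h : ℝ) ^ 2 := by
    have h1 : (inner ℝ g (‖g‖ ^ 2 • h - (inner ℝ g h : ℝ) • g) : ℝ) ≤ 0 := by
      rw [inner_sub_right, real_inner_smul_right, real_inner_smul_right,
        real_inner_self_eq_norm_sq]
      nlinarith
    have h2 := key2 _ h1
    rw [inner_sub_right, real_inner_smul_right, real_inner_smul_right,
      real_inner_self_eq_norm_sq] at h2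
    nlinarith [real_inner_comm h g]
  have hhnorm : (0:ℝ) < ‖h‖ := norm_pos_iff.mpr hgy
  have heq : (inner ℝ g h : ℝ) = ‖g‖ * ‖h‖ := by nlinarith
  have hpar : ‖h‖ • g = ‖g‖ • h := inner_eq_norm_mul_iff_real.mp heq
  have := congrArg (fun v : EuclideanSpace ℝ (Fin n) => (‖g‖⁻¹ * ‖h‖⁻¹) • v) hpar
  simp only [smul_smul] at this
  rw [show ‖g‖⁻¹ * ‖h‖⁻¹ * ‖h‖ = ‖g‖⁻¹ by
      rw [mul_assoc, inv_mul_cancel₀ (ne_of_gt hhnorm), mul_one],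
    show ‖g‖⁻¹ * ‖h‖⁻¹ * ‖g‖ = ‖h‖⁻¹ by
      rw [mul_comm ‖g‖⁻¹ ‖h‖⁻¹, mul_assoc, inv_mul_cancel₀ (ne_of_gt hgnorm), mul_one]] at this
  exact this
end

section
/- Let Γ ⊆ ℝⁿ be open and convex, S ⊆ Γ convex, f : Γ → ℝ continuously differentiable and quasiconvex, with nonempty solution set S̄ = argmin{f(x) | x ∈ S}. Then exactly one of the following holds: (I) ∇f(x) ≠ 0 for all x ∈ S̄ and the normalized gradient ∇f(x)/‖∇f(x)‖ is constant on S̄; (II) ∇f(x) = 0 for all x ∈ S̄. -/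
open Set Filter Metric
open scoped RealInnerProductSpace Topology

section Aux

set_option linter.unusedSectionVars false
variable {E : Type*} [NormedAddCommGroup E] [InnerProductSpace ℝ E] [CompleteSpace E]

lemma aux_hasDerivAt {f : E → ℝ} {a w : E} {t₀ : ℝ}
    (hd : DifferentiableAt ℝ f (a + t₀ • w)) :
    HasDerivAt (fun t : ℝ => f (a + t • w)) (fderiv ℝ f (a + t₀ • w) w) t₀ := by
  have h1 : HasDerivAt (fun t : ℝ => a + t • w) w t₀ := by
    simpa using ((hasDerivAt_id t₀).smul_const w).const_add a
  exact hd.hasFDerivAt.comp_hasDerivAt t₀ h1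

lemma slope_nonpos {g : ℝ → ℝ} {c : ℝ} (hg : HasDerivAt g c 0)
    (h : ∀ᶠ t in 𝓝[>] (0:ℝ), g t ≤ g 0) : c ≤ 0 := by
  have ht : Tendsto (slope g 0) (𝓝[>] (0:ℝ)) (𝓝 c) :=
    (hasDerivAt_iff_tendsto_slope.mp hg).mono_left
      (nhdsWithin_mono _ (fun x hx => ne_of_gt hx))
  refine le_of_tendsto ht ?_
  filter_upwards [h, self_mem_nhdsWithin] with t h1 h2
  have hs : slope g 0 t = (g t - g 0) / t := by simp [slope_def_field]
  rw [hs]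
  exact div_nonpos_of_nonpos_of_nonneg (sub_nonpos.mpr h1) (le_of_lt h2)

lemma slope_eq_zero {g : ℝ → ℝ} {c : ℝ} (hg : HasDerivAt g c 0)
    (h : ∀ᶠ t in 𝓝[>] (0:ℝ), g t = g 0) : c = 0 := by
  have h1 : c ≤ 0 := slope_nonpos hg (h.mono fun t ht => le_of_eq ht)
  have h2 : -c ≤ 0 := slope_nonpos hg.neg (h.mono fun t ht => by simp [ht])
  linarith

lemma slope_eventually_lt {g : ℝ → ℝ} {c : ℝ} (hg : HasDerivAt g c 0) (hc : c < 0) :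
    ∀ᶠ t in 𝓝[>] (0:ℝ), g t < g 0 := by
  have ht : Tendsto (slope g 0) (𝓝[>] (0:ℝ)) (𝓝 c) :=
    (hasDerivAt_iff_tendsto_slope.mp hg).mono_left
      (nhdsWithin_mono _ (fun x hx => ne_of_gt hx))
  filter_upwards [ht (Iio_mem_nhds hc), self_mem_nhdsWithin] with t h1 h2
  have hs : slope g 0 t = (g t - g 0) / t := by simp [slope_def_field]
  have h1' : (g t - g 0) / t < 0 := by rw [← hs]; exact h1
  have := (div_neg_iff).mp h1'
  have h2' : (0:ℝ) < t := h2
  rcases this with ⟨h3, h4⟩ | ⟨h3, h4⟩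
  · linarith
  · linarith

lemma mvt_lower {g : ℝ → ℝ} {d : ℝ → ℝ} {S c : ℝ} (hS : 0 ≤ S)
    (hd : ∀ s ∈ Icc (0:ℝ) S, HasDerivAt g (d s) s)
    (hc : ∀ s ∈ Icc (0:ℝ) S, c ≤ d s) :
    g 0 + c * S ≤ g S := by
  set G : ℝ → ℝ := fun s => g s - c * s with hG
  have hdG : ∀ s ∈ Icc (0:ℝ) S, HasDerivAt G (d s - c) s := fun s hs =>
    (hd s hs).sub (by simpa using (hasDerivAt_id s).const_mul c)
  have hmono : MonotoneOn G (Icc (0:ℝ) S) := by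
    apply monotoneOn_of_deriv_nonneg (convex_Icc 0 S)
    · exact fun s hs => ((hdG s hs).continuousAt).continuousWithinAt
    · intro s hs
      exact ((hdG s (interior_subset hs)).differentiableAt).differentiableWithinAt
    · intro s hs
      rw [(hdG s (interior_subset hs)).deriv]
      have := hc s (interior_subset hs)
      linarith
  have := hmono (left_mem_Icc.mpr hS) (right_mem_Icc.mpr hS) hS
  simp only [hG, mul_zero, sub_zero] at this
  linarith

end Aux

set_option maxHeartbeats 1000000 in
theorem stmt_5 {n : ℕ} (Γ S : Set (EuclideanSpace ℝ (Fin n)))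
    (hΓo : IsOpen Γ) (hΓ : Convex ℝ Γ) (hS : Convex ℝ S) (hSΓ : S ⊆ Γ)
    (f : EuclideanSpace ℝ (Fin n) → ℝ)
    (hC1 : ContDiffOn ℝ 1 f Γ)
    (hqc : ∀ x ∈ Γ, ∀ y ∈ Γ, ∀ t ∈ Set.Icc (0:ℝ) 1,
        f (x + t • (y - x)) ≤ max (f x) (f y))
    (Sbar : Set (EuclideanSpace ℝ (Fin n)))
    (hSbar : Sbar = {x ∈ S | ∀ y ∈ S, f x ≤ f y})
    (hne : Sbar.Nonempty) :
    Xor'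
      ((∀ x ∈ Sbar, gradient f x ≠ 0) ∧
        (∀ x ∈ Sbar, ∀ y ∈ Sbar,
          ‖gradient f x‖⁻¹ • gradient f x = ‖gradient f y‖⁻¹ • gradient f y))
      (∀ x ∈ Sbar, gradient f x = 0) := by
  obtain ⟨x₀, hx₀⟩ := hne
  have hmemS : ∀ a ∈ Sbar, a ∈ S := fun a ha => by rw [hSbar] at ha; exact ha.1
  have hmin : ∀ a ∈ Sbar, ∀ z ∈ S, f a ≤ f z := fun a ha => by
    rw [hSbar] at ha; exact ha.2
  have hΓmem : ∀ a ∈ Sbar, a ∈ Γ := fun a ha => hSΓ (hmemS a ha)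
  have hdiff : ∀ a ∈ Γ, DifferentiableAt ℝ f a := fun a ha =>
    (hC1.differentiableOn one_ne_zero).differentiableAt (hΓo.mem_nhds ha)
  have hginner : ∀ (a w : EuclideanSpace ℝ (Fin n)),
      ⟪gradient f a, w⟫ = fderiv ℝ f a w := fun a w => by
    simp [gradient, InnerProductSpace.toDual_symm_apply]
  have hval : ∀ a ∈ Sbar, ∀ b ∈ Sbar, f a = f b := fun a ha b hb =>
    le_antisymm (hmin a ha b (hmemS b hb)) (hmin b hb a (hmemS a ha))
  have hseg : ∀ a ∈ Sbar, ∀ b ∈ Sbar, ∀ t ∈ Icc (0:ℝ) 1,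
      f (a + t • (b - a)) = f a := by
    intro a ha b hb t ht
    refine le_antisymm ?_ ?_
    · have h := hqc a (hΓmem a ha) b (hΓmem b hb) t ht
      rw [← hval a ha b hb, max_self] at h
      exact h
    · have h1 : (1-t) • a + t • b ∈ S :=
        hS (hmemS a ha) (hmemS b hb) (by linarith [ht.2]) ht.1 (by ring)
      have h2 : a + t • (b - a) = (1-t) • a + t • b := by module
      rw [h2]
      exact hmin a ha _ h1
  -- Lemma 1 : first order condition
  have hL1 : ∀ a ∈ Γ, ∀ z ∈ Γ, f z ≤ f a → fderiv ℝ f a (z - a) ≤ 0 := by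
    intro a ha z hz hfz
    have hd' : HasDerivAt (fun t : ℝ => f (a + t • (z - a))) (fderiv ℝ f a (z - a)) 0 := by
      simpa using aux_hasDerivAt (f := f) (a := a) (w := z - a) (t₀ := 0)
        (by simpa using hdiff a ha)
    refine slope_nonpos hd' ?_
    filter_upwards [Ioc_mem_nhdsGT_of_mem (Set.mem_Ico.mpr ⟨le_refl (0:ℝ), one_pos⟩)] with t ht
    have h := hqc a ha z hz t ⟨ht.1.le, ht.2⟩
    simp only [zero_smul, add_zero]
    exact le_trans h (max_le le_rfl hfz)
  -- derivative along segment between two minimizers is zero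
  have hperp : ∀ a ∈ Sbar, ∀ b ∈ Sbar, fderiv ℝ f a (b - a) = 0 := by
    intro a ha b hb
    have hd' : HasDerivAt (fun t : ℝ => f (a + t • (b - a))) (fderiv ℝ f a (b - a)) 0 := by
      simpa using aux_hasDerivAt (f := f) (a := a) (w := b - a) (t₀ := 0)
        (by simpa using hdiff a (hΓmem a ha))
    refine slope_eq_zero hd' ?_
    filter_upwards [Ioc_mem_nhdsGT_of_mem (Set.mem_Ico.mpr ⟨le_refl (0:ℝ), one_pos⟩)] with t ht
    simp only [zero_smul, add_zero]
    exact hseg a ha b hb t ⟨ht.1.le, ht.2⟩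
  -- existence of strictly smaller values in strictly descending directions
  have hB' : ∀ a ∈ Γ, ∀ w, fderiv ℝ f a w < 0 →
      ∃ t : ℝ, 0 < t ∧ a + t • w ∈ Γ ∧ f (a + t • w) < f a := by
    intro a ha w hw
    have hd' : HasDerivAt (fun t : ℝ => f (a + t • w)) (fderiv ℝ f a w) 0 := by
      simpa using aux_hasDerivAt (f := f) (a := a) (w := w) (t₀ := 0)
        (by simpa using hdiff a ha)
    have h1 := slope_eventually_lt hd' hw
    have hcont : ContinuousAt (fun t : ℝ => a + t • w) 0 := by fun_prop
    have h2 : ∀ᶠ t in 𝓝 (0:ℝ), a + t • w ∈ Γ :=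
      hcont.eventually_mem (hΓo.mem_nhds (by simpa using ha))
    obtain ⟨t, ⟨hlt, hmem⟩, htpos⟩ :=
      ((h1.and (h2.filter_mono nhdsWithin_le_nhds)).and self_mem_nhdsWithin).exists
    exact ⟨t, htpos, hmem, by simpa using hlt⟩
  -- halfspace lemma
  have hP : ∀ a ∈ Sbar, ∀ b ∈ Sbar, ∀ w, fderiv ℝ f a w < 0 → fderiv ℝ f b w ≤ 0 := by
    intro a ha b hb w hw
    obtain ⟨t, htpos, hzΓ, hzlt⟩ := hB' a (hΓmem a ha) w hw
    have h1 : fderiv ℝ f b (a + t • w - b) ≤ 0 := by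
      refine hL1 b (hΓmem b hb) _ hzΓ ?_
      calc f (a + t • w) ≤ f a := hzlt.le
        _ = f b := hval a ha b hb
    have h2 : a + t • w - b = (a - b) + t • w := by module
    rw [h2, map_add, map_smul, hperp b hb a ha] at h1
    simp only [zero_add, smul_eq_mul] at h1
    by_contra hcon
    push_neg at hcon
    nlinarith
  -- parallel gradients on the solution set
  have hpar : ∀ a ∈ Sbar, ∀ b ∈ Sbar, gradient f a ≠ 0 →
      ∃ c : ℝ, 0 ≤ c ∧ gradient f b = c • gradient f a := by
    intro a ha b hb hu
    set u := gradient f a with hu_def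
    set v := gradient f b with hv_def
    have hu2 : 0 < ⟪u, u⟫ := by
      have h0 : 0 < ‖u‖ := norm_pos_iff.mpr hu
      rw [real_inner_self_eq_norm_sq]
      positivity
    have hP' : ∀ w, ⟪u, w⟫ < 0 → ⟪v, w⟫ ≤ 0 := by
      intro w hw
      rw [hv_def, hginner]
      exact hP a ha b hb w (by rw [← hginner]; exact hw)
    have hP2 : ∀ w, ⟪u, w⟫ ≤ 0 → ⟪v, w⟫ ≤ 0 := by
      intro w hw
      by_contra hcon
      push_neg at hcon
      set B := |⟪v, u⟫| with hB
      have hBnn : 0 ≤ B := abs_nonneg _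
      set ε := ⟪v, w⟫ / (2 * (B + 1)) with hε
      have hεpos : 0 < ε := div_pos hcon (by linarith)
      have h1 : ⟪u, w - ε • u⟫ < 0 := by
        rw [inner_sub_right, real_inner_smul_right]
        nlinarith
      have h2 := hP' _ h1
      rw [inner_sub_right, real_inner_smul_right] at h2
      have habs : ε * ⟪v, u⟫ ≤ ε * B := by
        apply mul_le_mul_of_nonneg_left (le_abs_self _) hεpos.le
      have hlt : ε * B < ⟪v, w⟫ := by
        rw [hε, div_mul_eq_mul_div, div_lt_iff₀ (by linarith : (0:ℝ) < 2 * (B + 1))]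
        nlinarith
      linarith
    set c := ⟪v, u⟫ / ⟪u, u⟫ with hc
    have hw0 : ⟪u, v - c • u⟫ = 0 := by
      rw [inner_sub_right, real_inner_smul_right, hc, real_inner_comm u v,
        div_mul_cancel₀ _ (ne_of_gt hu2), sub_self]
    have h3 : ⟪v, v - c • u⟫ ≤ 0 := hP2 _ (le_of_eq hw0)
    have h4 : ⟪v, -(v - c • u)⟫ ≤ 0 := hP2 _ (by rw [inner_neg_right, hw0]; norm_num)
    rw [inner_neg_right] at h4
    have h5 : ⟪v, v - c • u⟫ = 0 := le_antisymm h3 (by linarith)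
    have h6 : ⟪v - c • u, v - c • u⟫ = 0 := by
      rw [inner_sub_left, real_inner_smul_left, h5, hw0]
      ring
    have h7 : v - c • u = 0 := inner_self_eq_zero.mp h6
    have hc0 : 0 ≤ c := by
      have hn := hP' (-u) (by rw [inner_neg_right]; linarith)
      rw [inner_neg_right] at hn
      exact div_nonneg (by linarith) hu2.le
    exact ⟨c, hc0, sub_eq_zero.mp h7⟩
  -- mixed case exclusion
  have hD : ∀ a ∈ Sbar, ∀ b ∈ Sbar, gradient f a ≠ 0 → gradient f b ≠ 0 := by
    intro a ha b hb hu hb0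
    set u := gradient f a with hu_def
    have hunorm : 0 < ‖u‖ := norm_pos_iff.mpr hu
    set e : EuclideanSpace ℝ (Fin n) := ‖u‖⁻¹ • u with he_def
    have henorm : ‖e‖ = 1 := by
      rw [he_def, norm_smul, norm_inv, norm_norm]
      field_simp
    have hae : fderiv ℝ f a e = ‖u‖ := by
      rw [← hginner, he_def, real_inner_smul_right, real_inner_self_eq_norm_sq]
      field_simp
      ring
    have hFcont : ContinuousOn (fderiv ℝ f) Γ := hC1.continuousOn_fderiv_of_isOpen hΓo le_rfl
    have haΓ := hΓmem a ha
    have hbΓ := hΓmem b hb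
    have hca : ContinuousAt (fun w => fderiv ℝ f w e) a :=
      (ContinuousLinearMap.apply ℝ ℝ e).continuous.continuousAt.comp
        (hFcont.continuousAt (hΓo.mem_nhds haΓ))
    have h1 : ∀ᶠ w in 𝓝 a, ‖u‖/2 < fderiv ℝ f w e :=
      hca (Ioi_mem_nhds (show ‖u‖ / 2 < fderiv ℝ f a e by rw [hae]; linarith))
    obtain ⟨ε₁, hε₁pos, hball₁⟩ := Metric.eventually_nhds_iff.mp
      (h1.and (hΓo.eventually_mem haΓ))
    set t := min (1/2 : ℝ) (ε₁ / (2 * ‖b - a‖ + 2)) with ht_def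
    have htpos : 0 < t := lt_min (by norm_num) (by positivity)
    have ht1 : t ≤ 1/2 := min_le_left _ _
    have hkey : t * (2 * ‖b - a‖ + 2) ≤ ε₁ :=
      (le_div_iff₀ (by positivity)).mp (min_le_right _ _)
    have hnb : 0 ≤ ‖b - a‖ := norm_nonneg _
    have htd : t * ‖b - a‖ ≤ ε₁ / 2 := by nlinarith
    have htε : t ≤ ε₁ / 2 := by nlinarith
    set η := t * ‖u‖ / 4 with hη
    have hηpos : 0 < η := by positivity
    have hfb0 : fderiv ℝ f b = 0 := ContinuousLinearMap.ext fun w => by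
      rw [← hginner, hb0, inner_zero_left]; rfl
    have hcb : ContinuousAt (fun w => ‖fderiv ℝ f w‖) b :=
      continuous_norm.continuousAt.comp (hFcont.continuousAt (hΓo.mem_nhds hbΓ))
    have h3 : ∀ᶠ w in 𝓝 b, ‖fderiv ℝ f w‖ < η :=
      hcb (Iio_mem_nhds (show ‖fderiv ℝ f b‖ < η by rw [hfb0]; simpa using hηpos))
    obtain ⟨ε₂, hε₂pos, hball₂⟩ := Metric.eventually_nhds_iff.mp
      (h3.and (hΓo.eventually_mem hbΓ))
    set ε := min ε₂ 1 with hε_def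
    have hεpos : 0 < ε := lt_min hε₂pos one_pos
    have hε1 : ε ≤ 1 := min_le_right _ _
    have hεε₂ : ε ≤ ε₂ := min_le_left _ _
    set bpt := b + (ε/2) • e with hbpt_def
    have hbdist : dist bpt b < ε₂ := by
      rw [hbpt_def, dist_eq_norm, add_sub_cancel_left, norm_smul, henorm,
        Real.norm_eq_abs, abs_of_pos (by linarith)]
      linarith
    have hbptΓ : bpt ∈ Γ := (hball₂ hbdist).2
    have hfbpt : f bpt ≤ f b + η * (ε/2) := by
      have hmvt := Convex.norm_image_sub_le_of_norm_fderiv_le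
        (fun w hw => hdiff w (hball₂ (mem_ball.mp hw)).2)
        (fun w hw => (hball₂ (mem_ball.mp hw)).1.le)
        (convex_ball b ε₂) (mem_ball_self hε₂pos) (mem_ball.mpr hbdist)
      have hnorm : ‖bpt - b‖ = ε/2 := by
        rw [hbpt_def, add_sub_cancel_left, norm_smul, henorm, Real.norm_eq_abs,
          abs_of_pos (by linarith)]
        ring
      rw [hnorm] at hmvt
      have := le_trans (le_abs_self _) hmvt
      linarith
    have hqb : f (a + t • (bpt - a)) ≤ f a + η * (ε/2) := by
      have h := hqc a haΓ bpt hbptΓ t ⟨htpos.le, by linarith⟩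
      have hba : f b = f a := hval b hb a ha
      refine le_trans h (max_le ?_ ?_)
      · nlinarith
      · linarith
    set at_ := a + t • (b - a) with hat_def
    have hat : f at_ = f a := hseg a ha b hb t ⟨htpos.le, by linarith⟩
    have hpt : a + t • (bpt - a) = at_ + (t * (ε/2)) • e := by
      rw [hbpt_def, hat_def]; module
    set Sc := t * (ε/2) with hSc
    have hScpos : 0 < Sc := by positivity
    have hin : ∀ s ∈ Icc (0:ℝ) Sc, dist (at_ + s • e) a < ε₁ := by
      intro s hs
      have h1 : at_ + s • e - a = t • (b - a) + s • e := by rw [hat_def]; module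
      rw [dist_eq_norm, h1]
      calc ‖t • (b - a) + s • e‖ ≤ ‖t • (b-a)‖ + ‖s • e‖ := norm_add_le _ _
        _ = t * ‖b - a‖ + s := by
            rw [norm_smul, norm_smul, henorm, Real.norm_eq_abs, Real.norm_eq_abs,
              abs_of_pos htpos, abs_of_nonneg hs.1]
            ring
        _ < ε₁ := by
            have hsS : s ≤ Sc := hs.2
            have : Sc ≤ t/2 := by rw [hSc]; nlinarith
            nlinarith
    have hd : ∀ s ∈ Icc (0:ℝ) Sc,
        HasDerivAt (fun r : ℝ => f (at_ + r • e)) (fderiv ℝ f (at_ + s • e) e) s :=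
      fun s hs => aux_hasDerivAt (hdiff _ (hball₁ (hin s hs)).2)
    have hlow : ∀ s ∈ Icc (0:ℝ) Sc, ‖u‖/2 ≤ fderiv ℝ f (at_ + s • e) e :=
      fun s hs => (hball₁ (hin s hs)).1.le
    have hmvt2 := mvt_lower hScpos.le hd hlow
    simp only [zero_smul, add_zero] at hmvt2
    rw [hat] at hmvt2
    rw [hpt] at hqb
    rw [hη] at hqb
    have hprod : 0 < t * (ε/2) := by positivity
    rw [hSc] at hmvt2 hqb
    nlinarith [hprod, hunorm, hmvt2, hqb]
  -- assemble
  rcases Classical.em (∀ x ∈ Sbar, gradient f x = 0) with hz | hz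
  · exact Or.inr ⟨hz, fun hI => hI.1 x₀ hx₀ (hz x₀ hx₀)⟩
  · push_neg at hz
    obtain ⟨xb, hxb, hxbne⟩ := hz
    have hall : ∀ y ∈ Sbar, gradient f y ≠ 0 := fun y hy => hD xb hxb y hy hxbne
    have hnorm0 : ‖gradient f xb‖ ≠ 0 := norm_ne_zero_iff.mpr hxbne
    have hdir : ∀ y ∈ Sbar,
        ‖gradient f y‖⁻¹ • gradient f y = ‖gradient f xb‖⁻¹ • gradient f xb := by
      intro y hy
      obtain ⟨c, hc0, hvc⟩ := hpar xb hxb y hy hxbne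
      have hcpos : 0 < c := by
        rcases hc0.eq_or_lt with h | h
        · exfalso; exact hall y hy (by rw [hvc, ← h, zero_smul])
        · exact h
      rw [hvc, norm_smul, Real.norm_eq_abs, abs_of_pos hcpos, smul_smul]
      congr 1
      field_simp
    exact Or.inl ⟨⟨hall, fun p hp q hq => (hdir p hp).trans (hdir q hq).symm⟩,
      fun h => hxbne (h xb hxb)⟩
end

section
/- Let Γ ⊆ ℝⁿ be open and convex, S ⊆ Γ convex, f : Γ → ℝ continuously differentiable and pseudoconvex on Γ. Let x̄ be a known global minimizer of f on S. Then S̄ = {x ∈ S | ⟨∇f(x̄), x − x̄⟩ ≤ 0 and ∃ p > 0 with ∇f(x) = p·∇f(x̄)}. -/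
open InnerProductSpace Filter Set Topology

variable {E : Type*} [NormedAddCommGroup E] [InnerProductSpace ℝ E] [CompleteSpace E]

lemma grad_line_deriv {f : E → ℝ} {g x : E} (hg : HasGradientAt f g x) (d : E) :
    HasDerivAt (fun t : ℝ => f (x + t • d)) (inner ℝ g d : ℝ) 0 := by
  have hline : HasDerivAt (fun t : ℝ => x + t • d) d 0 := by
    simpa using ((hasDerivAt_id (0:ℝ)).smul_const d).const_add x
  have hf : HasFDerivAt f (toDual ℝ E g) x := hg
  have hf' : HasFDerivAt f (toDual ℝ E g) ((fun t : ℝ => x + t • d) 0) := by simpa using hf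
  have := hf'.comp_hasDerivAt 0 hline
  simp at this
  exact this

lemma deriv_nonneg_of_min {g : ℝ → ℝ} {c : ℝ} (hd : HasDerivAt g c 0)
    (h : ∀ t ∈ Set.Ioo (0:ℝ) 1, g 0 ≤ g t) : 0 ≤ c := by
  have hs : Tendsto (slope g 0) (𝓝[>] 0) (𝓝 c) :=
    (hasDerivAt_iff_tendsto_slope.mp hd).mono_left
      (nhdsWithin_mono _ (fun t ht => ne_of_gt ht))
  refine ge_of_tendsto hs ?_
  filter_upwards [Ioo_mem_nhdsGT_of_mem (by norm_num : (0:ℝ) ∈ Ico (0:ℝ) 1)] with t ht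
  have := h t ht
  rw [slope_def_field, sub_zero]
  exact div_nonneg (by linarith) ht.1.le

lemma eventually_lt_of_deriv_neg {g : ℝ → ℝ} {c : ℝ} (hd : HasDerivAt g c 0) (hc : c < 0) :
    ∀ᶠ t in 𝓝[>] (0:ℝ), g t < g 0 := by
  have hs : Tendsto (slope g 0) (𝓝[>] 0) (𝓝 c) :=
    (hasDerivAt_iff_tendsto_slope.mp hd).mono_left
      (nhdsWithin_mono _ (fun t ht => ne_of_gt ht))
  filter_upwards [hs.eventually_lt_const hc, self_mem_nhdsWithin] with t ht ht0
  rw [slope_def_field, sub_zero, div_neg_iff] at ht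
  rcases ht with ⟨h1, h2⟩ | ⟨h1, h2⟩
  · linarith [show (0:ℝ) < t from ht0]
  · linarith

lemma sep_lemma {a b : E} (ha : a ≠ 0) (hb : b ≠ 0)
    (h : ¬ ∃ p : ℝ, 0 < p ∧ b = p • a) :
    ∃ v : E, (inner ℝ a v : ℝ) < 0 ∧ (0:ℝ) < inner ℝ b v := by
  set l : ℝ := (inner ℝ a b : ℝ) / ‖a‖ ^ 2 with hl
  set w : E := b - l • a with hw
  have hna : (0:ℝ) < ‖a‖ ^ 2 := by
    have := norm_pos_iff.mpr ha; positivity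
  have haw : (inner ℝ a w : ℝ) = 0 := by
    simp only [hw, inner_sub_right, real_inner_smul_right, hl]
    rw [real_inner_self_eq_norm_sq]
    field_simp
    ring
  by_cases hw0 : w = 0
  · have hb' : b = l • a := by
      have h0 : b - l • a = 0 := hw ▸ hw0
      rw [sub_eq_zero] at h0; exact h0
    have hl0 : l ≠ 0 := by
      intro h0; rw [h0, zero_smul] at hb'; exact hb hb'
    have hlneg : l < 0 := by
      rcases lt_trichotomy l 0 with h'|h'|h'
      · exact h'
      · exact absurd h' hl0
      · exact absurd ⟨l, h', hb'⟩ h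
    refine ⟨-a, ?_, ?_⟩
    · rw [inner_neg_right, real_inner_self_eq_norm_sq]; linarith
    · rw [hb', inner_neg_right, real_inner_smul_left, real_inner_self_eq_norm_sq]
      nlinarith
  · -- w ≠ 0 case
    have hnw : (0:ℝ) < ‖w‖ ^ 2 := by
      have := norm_pos_iff.mpr hw0; positivity
    set ε : ℝ := ‖w‖ ^ 2 / (2 * (|(inner ℝ a b : ℝ)| + 1)) with he
    have hε : 0 < ε := by positivity
    refine ⟨w - ε • a, ?_, ?_⟩
    · rw [inner_sub_right, haw, real_inner_smul_right, real_inner_self_eq_norm_sq]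
      nlinarith
    · have hbw : (inner ℝ b w : ℝ) = ‖w‖ ^ 2 := by
        have : b = l • a + w := by rw [hw]; abel
        rw [this, inner_add_left, real_inner_smul_left, real_inner_self_eq_norm_sq,
          haw]
        ring
      rw [inner_sub_right, hbw, real_inner_smul_right]
      have hba : (inner ℝ b a : ℝ) = inner ℝ a b := real_inner_comm a b
      rw [hba]
      have h1 : ε * (inner ℝ a b : ℝ) ≤ ε * |(inner ℝ a b : ℝ)| :=
        mul_le_mul_of_nonneg_left (le_abs_self _) hε.le
      have h2 : ε * (|(inner ℝ a b : ℝ)| + 1) = ‖w‖ ^ 2 / 2 := by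
        rw [he]; field_simp
      nlinarith

lemma gradient_zero_of_isLocalMin {f : E → ℝ} {x : E} (h : IsLocalMin f x) :
    gradient f x = 0 := by
  unfold gradient
  rw [h.fderiv_eq_zero, map_zero]

theorem stmt_15 {n : ℕ} (Γ S : Set (EuclideanSpace ℝ (Fin n)))
    (hΓo : IsOpen Γ) (hΓ : Convex ℝ Γ) (hS : Convex ℝ S) (hSΓ : S ⊆ Γ)
    (f : EuclideanSpace ℝ (Fin n) → ℝ)
    (hC1 : ContDiffOn ℝ 1 f Γ)
    (hpc : ∀ x ∈ Γ, ∀ y ∈ Γ, f y < f x → (inner ℝ (gradient f x) (y - x) : ℝ) < 0)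
    (Sbar : Set (EuclideanSpace ℝ (Fin n)))
    (hSbar : Sbar = {x ∈ S | ∀ y ∈ S, f x ≤ f y})
    (xb : EuclideanSpace ℝ (Fin n)) (hxb : xb ∈ Sbar) :
    Sbar = {x ∈ S | (inner ℝ (gradient f xb) (x - xb) : ℝ) ≤ 0 ∧
      ∃ p : ℝ, 0 < p ∧ gradient f x = p • gradient f xb} := by
  subst hSbar
  obtain ⟨hxbS, hxbmin⟩ := hxb
  -- differentiability
  have hgrad : ∀ z ∈ Γ, HasGradientAt f (gradient f z) z := fun z hz =>
    ((hC1.differentiableOn one_ne_zero).differentiableAt (hΓo.mem_nhds hz)).hasGradientAt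
  -- global min on Γ if gradient vanishes
  have hglob : ∀ z ∈ Γ, gradient f z = 0 → ∀ y ∈ Γ, f z ≤ f y := by
    intro z hz h0 y hy
    by_contra hlt
    have := hpc z hz y hy (not_le.mp hlt)
    rw [h0] at this
    simp at this
  -- one-sided derivative nonneg at a minimizer, toward any point of S
  have hdir : ∀ x ∈ S, (∀ y ∈ S, f x ≤ f y) → ∀ y ∈ S,
      (0:ℝ) ≤ inner ℝ (gradient f x) (y - x) := by
    intro x hxS hxmin y hyS
    refine deriv_nonneg_of_min (grad_line_deriv (hgrad x (hSΓ hxS)) (y - x)) ?_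
    intro t ht
    have hmem : x + t • (y - x) ∈ S := hS.add_smul_sub_mem hxS hyS ⟨ht.1.le, ht.2.le⟩
    simpa using hxmin _ hmem
  ext x
  simp only [Set.mem_setOf_eq]
  constructor
  · rintro ⟨hxS, hxmin⟩
    have hfx : f x = f xb := le_antisymm (hxmin xb hxbS) (hxbmin x hxS)
    by_cases hz : gradient f xb = 0
    · -- xb is a global min on Γ, hence so is x, hence gradient f x = 0
      have hxmin' : ∀ y ∈ Γ, f x ≤ f y := fun y hy =>
        hfx ▸ hglob xb (hSΓ hxbS) hz y hy
      have hloc : IsLocalMin f x := by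
        filter_upwards [hΓo.mem_nhds (hSΓ hxS)] with y hy using hxmin' y hy
      have hx0 : gradient f x = 0 := gradient_zero_of_isLocalMin hloc
      exact ⟨hxS, by simp [hz], 1, one_pos, by simp [hz, hx0]⟩
    · have hgx : gradient f x ≠ 0 := by
        intro h0
        have hxbglob : ∀ y ∈ Γ, f xb ≤ f y := fun y hy =>
          hfx ▸ hglob x (hSΓ hxS) h0 y hy
        have hloc : IsLocalMin f xb := by
          filter_upwards [hΓo.mem_nhds (hSΓ hxbS)] with y hy using hxbglob y hy
        exact hz (gradient_zero_of_isLocalMin hloc)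
      have hprop : ∃ p : ℝ, 0 < p ∧ gradient f x = p • gradient f xb := by
        by_contra hnp
        obtain ⟨v, hav, hbv⟩ := sep_lemma hz hgx hnp
        -- f decreases from xb in direction v
        have hder := grad_line_deriv (hgrad xb (hSΓ hxbS)) v
        have hev1 := eventually_lt_of_deriv_neg hder hav
        have hev2 : ∀ᶠ t in 𝓝[>] (0:ℝ), xb + t • v ∈ Γ := by
          apply eventually_nhdsWithin_of_eventually_nhds
          have hc : Continuous (fun t : ℝ => xb + t • v) := by continuity
          have : Tendsto (fun t : ℝ => xb + t • v) (𝓝 0) (𝓝 xb) := by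
            have := hc.tendsto 0
            simpa using this
          exact this.eventually (hΓo.eventually_mem (hSΓ hxbS))
        obtain ⟨t, ht1, htΓ, ht0⟩ := (hev1.and (hev2.and self_mem_nhdsWithin)).exists
        have htpos : (0:ℝ) < t := ht0
        have hflt : f (xb + t • v) < f x := by
          have : f (xb + t • v) < f (xb + (0:ℝ) • v) := ht1
          simpa [hfx] using this
        have hcontr := hpc x (hSΓ hxS) (xb + t • v) htΓ hflt
        have hexp : (xb + t • v) - x = (xb - x) + t • v := by abel
        rw [hexp, inner_add_right, real_inner_smul_right] at hcontr
        have key : (0:ℝ) ≤ inner ℝ (gradient f x) (xb - x) := hdir x hxS hxmin xb hxbS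
        nlinarith
      obtain ⟨p, hp, hpe⟩ := hprop
      have key : (0:ℝ) ≤ inner ℝ (gradient f x) (xb - x) := hdir x hxS hxmin xb hxbS
      rw [hpe, real_inner_smul_left] at key
      have : (inner ℝ (gradient f xb) (x - xb) : ℝ) = - inner ℝ (gradient f xb) (xb - x) := by
        rw [← inner_neg_right]; congr 1; abel
      rw [this]
      refine ⟨hxS, by nlinarith, p, hp, hpe⟩
  · rintro ⟨hxS, hle, p, hp, hpe⟩
    refine ⟨hxS, fun y hyS => ?_⟩
    have hfxb : f x ≤ f xb := by
      by_contra hlt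
      have := hpc x (hSΓ hxS) xb (hSΓ hxbS) (not_le.mp hlt)
      rw [hpe, real_inner_smul_left] at this
      have h2 : (inner ℝ (gradient f xb) (xb - x) : ℝ) = - inner ℝ (gradient f xb) (x - xb) := by
        rw [← inner_neg_right]; congr 1; abel
      rw [h2] at this
      nlinarith
    exact le_trans hfxb (hxbmin y hyS)
end
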